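/- Let E be a real Banach space, τ > 0 and C ≥ 0. Let ψ : [0,τ] → E be continuous on [0,τ] and differentiable on [0,τ) with ‖ψ′(v)‖ ≤ C (1 + τ/(τ − v)) for all v ∈ [0,τ). Then ‖∫₀^τ ψ(s) ds − τ ψ(0)‖ ≤ (3/2) C τ². -/

import Mathlib

open Set MeasureTheory intervalIntegral Filter
open scoped Topology

/-- `log` is interval integrable on `[0, τ]`. -/
lemma log_intervalIntegrable_aux {τ : ℝ} (hτ : 0 < τ) :
    IntervalIntegrable Real.log MeasureTheory.volume 0 τ := by
  have hdom : IntervalIntegrable (fun x : ℝ => 2 * x ^ (-(1/2) : ℝ) + |Real.log τ|)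
      MeasureTheory.volume 0 τ :=
    ((intervalIntegrable_rpow' (by norm_num)).const_mul 2).add intervalIntegrable_const
  refine hdom.mono_fun' Real.measurable_log.aestronglyMeasurable ?_
  have hI : Set.uIoc (0:ℝ) τ = Ioc 0 τ := uIoc_of_le hτ.le
  filter_upwards [ae_restrict_mem measurableSet_uIoc] with x hx
  rw [hI] at hx
  have hx0 : 0 < x := hx.1
  have hrpow : (0:ℝ) < x ^ (-(1/2) : ℝ) := Real.rpow_pos_of_pos hx0 _
  rcases le_or_gt x 1 with hx1 | hx1
  · have hlogle : Real.log x ≤ 0 := Real.log_nonpos hx0.le hx1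
    have h1 : -Real.log x = 2 * Real.log (x ^ (-(1/2) : ℝ)) := by
      rw [Real.log_rpow hx0]; ring
    have h2 : Real.log (x ^ (-(1/2) : ℝ)) ≤ x ^ (-(1/2) : ℝ) - 1 :=
      Real.log_le_sub_one_of_pos hrpow
    have : ‖Real.log x‖ = -Real.log x := by
      rw [Real.norm_eq_abs, abs_of_nonpos hlogle]
    rw [this, h1]
    have := abs_nonneg (Real.log τ)
    nlinarith
  · have h1 : Real.log x ≤ Real.log τ := Real.log_le_log hx0 hx.2
    have h2 : (0:ℝ) ≤ Real.log x := Real.log_nonneg hx1.le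
    have : ‖Real.log x‖ = Real.log x := by rw [Real.norm_eq_abs, abs_of_nonneg h2]
    rw [this]
    have := le_abs_self (Real.log τ)
    nlinarith

/-- `∫ x in 0..τ, log x = τ log τ − τ`. -/
lemma integral_log_from_zero_aux {τ : ℝ} (hτ : 0 < τ) :
    ∫ x in (0:ℝ)..τ, Real.log x = τ * Real.log τ - τ := by
  have hInt : IntervalIntegrable Real.log MeasureTheory.volume 0 τ :=
    log_intervalIntegrable_aux hτ
  have hIntOn : IntegrableOn Real.log (uIcc (0:ℝ) τ) MeasureTheory.volume := by
    rwa [intervalIntegrable_iff'] at hInt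
  have hcont : ContinuousOn (fun a => ∫ x in a..τ, Real.log x) (uIcc (0:ℝ) τ) :=
    intervalIntegral.continuousOn_primitive_interval_left hIntOn
  have h0mem : (0:ℝ) ∈ uIcc (0:ℝ) τ := left_mem_uIcc
  have htendsto1 : Tendsto (fun a => ∫ x in a..τ, Real.log x) (𝓝[>] (0:ℝ))
      (𝓝 (∫ x in (0:ℝ)..τ, Real.log x)) := by
    have h := (hcont 0 h0mem).tendsto
    refine h.mono_left ?_
    rw [← nhdsWithin_Ioc_eq_nhdsGT hτ]
    exact nhdsWithin_mono _ (by rw [uIcc_of_le hτ.le]; exact Ioc_subset_Icc_self)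
  have htendsto2 : Tendsto (fun a => ∫ x in a..τ, Real.log x) (𝓝[>] (0:ℝ))
      (𝓝 (τ * Real.log τ - τ)) := by
    have hmul : Tendsto (fun a : ℝ => a * Real.log a) (𝓝[>] (0:ℝ)) (𝓝 0) := by
      have := tendsto_log_mul_rpow_nhdsGT_zero (r := 1) one_pos
      simpa [Real.rpow_one, mul_comm] using this
    have hid : Tendsto (fun a : ℝ => a) (𝓝[>] (0:ℝ)) (𝓝 0) :=
      tendsto_id.mono_left nhdsWithin_le_nhds
    have hmain : Tendsto (fun a : ℝ => τ * Real.log τ - a * Real.log a - τ + a)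
        (𝓝[>] (0:ℝ)) (𝓝 (τ * Real.log τ - τ)) := by
      have := ((tendsto_const_nhds (x := τ * Real.log τ)).sub hmul).sub
        (tendsto_const_nhds (x := τ)) |>.add hid
      simpa using this
    refine hmain.congr' ?_
    filter_upwards [self_mem_nhdsWithin] with a (ha : 0 < a)
    rw [integral_log]
  exact tendsto_nhds_unique htendsto1 htendsto2

lemma integral_log_tau_sub {τ : ℝ} (hτ : 0 < τ) :
    ∫ s in (0:ℝ)..τ, Real.log (τ - s) = τ * Real.log τ - τ := by
  rw [intervalIntegral.integral_comp_sub_left Real.log τ]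
  simpa using integral_log_from_zero_aux hτ

lemma log_sub_intervalIntegrable {τ : ℝ} (hτ : 0 < τ) :
    IntervalIntegrable (fun s => Real.log (τ - s)) MeasureTheory.volume 0 τ := by
  have := (log_intervalIntegrable_aux hτ).comp_sub_left τ
  simpa using this.symm

/- STATEMENT 2: left-rectangle rule error O(τ²) under the singular derivative
   bound ‖ψ′(v)‖ ≤ C(1 + τ/(τ − v)). -/
theorem left_rectangle_error
    {E : Type*} [NormedAddCommGroup E] [NormedSpace ℝ E] [CompleteSpace E]
    (τ C : ℝ) (hτ : 0 < τ) (hC : 0 ≤ C)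
    (ψ ψ' : ℝ → E)
    (hcont : ContinuousOn ψ (Set.Icc (0:ℝ) τ))
    (hderiv : ∀ v ∈ Set.Ico (0:ℝ) τ, HasDerivWithinAt ψ (ψ' v) (Set.Ico (0:ℝ) τ) v)
    (hbound : ∀ v ∈ Set.Ico (0:ℝ) τ, ‖ψ' v‖ ≤ C * (1 + τ / (τ - v))) :
    ‖(∫ s in (0:ℝ)..τ, ψ s) - τ • ψ 0‖ ≤ 3 / 2 * C * τ ^ 2 := by
  set g : ℝ → ℝ := fun s => C * s + C * τ * Real.log τ - C * τ * Real.log (τ - s) with hg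
  -- Step 1: pointwise bound on [0, τ)
  have hstep1 : ∀ s ∈ Set.Ico (0:ℝ) τ, ‖ψ s - ψ 0‖ ≤ g s := by
    intro s hs
    have hsτ : s < τ := hs.2
    have hB' : ∀ x ∈ Set.Ico (0:ℝ) s, HasDerivWithinAt g (C * (1 + τ / (τ - x)))
        (Set.Ici x) x := by
      intro x hx
      have hxτ : x < τ := lt_trans hx.2 hsτ
      have hne : τ - x ≠ 0 := sub_ne_zero_of_ne hxτ.ne'
      have h1 : HasDerivAt (fun v : ℝ => τ - v) (-1) x := (hasDerivAt_id x).const_sub τ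
      have h2 : HasDerivAt (fun v : ℝ => Real.log (τ - v)) ((τ - x)⁻¹ * (-1)) x :=
        (Real.hasDerivAt_log hne).comp x h1
      have h3 : HasDerivAt g (C * 1 + 0 - C * τ * ((τ - x)⁻¹ * (-1))) x := by
        exact (((hasDerivAt_id x).const_mul C).add (hasDerivAt_const x (C * τ * Real.log τ))).sub
          (h2.const_mul (C * τ))
      have heq : C * 1 + 0 - C * τ * ((τ - x)⁻¹ * (-1)) = C * (1 + τ / (τ - x)) := by
        field_simp
        ring
      rw [heq] at h3
      exact h3.hasDerivWithinAt
    have hbd := image_norm_le_of_norm_deriv_right_le_deriv_boundary'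
      (f := fun v => ψ v - ψ 0) (f' := ψ') (a := 0) (b := s)
      ((hcont.mono (Set.Icc_subset_Icc le_rfl hsτ.le)).sub continuousOn_const)
      (fun x hx => by
        have hx' : x ∈ Set.Ico (0:ℝ) τ := ⟨hx.1, lt_trans hx.2 hsτ⟩
        have hmem : Set.Ico (0:ℝ) τ ∈ nhdsWithin x (Set.Ici x) := by
          refine mem_nhdsWithin.mpr ⟨Set.Iio τ, isOpen_Iio, hx'.2, ?_⟩
          rintro y ⟨hy1, hy2⟩
          exact ⟨le_trans hx'.1 hy2, hy1⟩
        exact ((hderiv x hx').sub_const (ψ 0)).mono_of_mem_nhdsWithin hmem)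
      (B := g) (B' := fun x => C * (1 + τ / (τ - x)))
      (by simp [hg])
      (by
        have hlog : ContinuousOn (fun v : ℝ => Real.log (τ - v)) (Set.Icc 0 s) := by
          refine ContinuousOn.log (continuousOn_const.sub continuousOn_id) ?_
          intro v hv
          have : v < τ := lt_of_le_of_lt hv.2 hsτ
          exact ne_of_gt (sub_pos.mpr this)
        exact ((continuousOn_const.mul continuousOn_id).add continuousOn_const).sub
          (continuousOn_const.mul hlog))
      hB'
      (fun x hx => hbound x ⟨hx.1, lt_trans hx.2 hsτ⟩)
    exact hbd (Set.right_mem_Icc.mpr hs.1)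
  -- integrabilities
  have hψint : IntervalIntegrable ψ MeasureTheory.volume 0 τ := by
    apply ContinuousOn.intervalIntegrable
    rwa [Set.uIcc_of_le hτ.le]
  have hgint : IntervalIntegrable g MeasureTheory.volume 0 τ := by
    have h1 : IntervalIntegrable (fun s : ℝ => C * s + C * τ * Real.log τ)
        MeasureTheory.volume 0 τ := by
      apply Continuous.intervalIntegrable; continuity
    exact h1.sub ((log_sub_intervalIntegrable hτ).const_mul (C * τ))
  -- Step 2: rewrite the difference as an integral
  have hrw : (∫ s in (0:ℝ)..τ, ψ s) - τ • ψ 0 = ∫ s in (0:ℝ)..τ, (ψ s - ψ 0) := by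
    rw [intervalIntegral.integral_sub hψint intervalIntegrable_const,
      intervalIntegral.integral_const]
    simp
  -- Step 3: value of ∫ g
  have hgval : (∫ s in (0:ℝ)..τ, g s) = 3 / 2 * C * τ ^ 2 := by
    have h1 : IntervalIntegrable (fun s : ℝ => C * s + C * τ * Real.log τ)
        MeasureTheory.volume 0 τ := by
      apply Continuous.intervalIntegrable; continuity
    rw [hg]
    rw [intervalIntegral.integral_sub h1
      ((log_sub_intervalIntegrable hτ).const_mul (C * τ)),
      intervalIntegral.integral_add (by apply Continuous.intervalIntegrable; continuity)
        intervalIntegrable_const,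
      intervalIntegral.integral_const_mul, integral_id,
      intervalIntegral.integral_const_mul, intervalIntegral.integral_const_mul,
      integral_log_tau_sub hτ, intervalIntegral.integral_const]
    simp only [smul_eq_mul, sub_zero]
    ring
  -- Step 4: combine
  rw [hrw]
  calc ‖∫ s in (0:ℝ)..τ, (ψ s - ψ 0)‖ ≤ |∫ s in (0:ℝ)..τ, g s| := by
        refine le_trans (intervalIntegral.norm_integral_le_of_norm_le hτ.le ?_ hgint) (le_abs_self _)
        have hne : ∀ᵐ t : ℝ ∂MeasureTheory.volume, t ≠ τ := by
          rw [MeasureTheory.ae_iff]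
          simpa [Set.setOf_eq_eq_singleton, not_not] using Real.volume_singleton (a := τ)
        filter_upwards [hne] with t htne ht
        exact hstep1 t ⟨ht.1.le, lt_of_le_of_ne ht.2 htne⟩
    _ = 3 / 2 * C * τ ^ 2 := by
        rw [hgval, abs_of_nonneg (by positivity)]
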